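/- Let X ⊆ ℝⁿ, T > 0, X₀, X_T ⊆ X, and let f : [0,T] × ℝⁿ → ℝⁿ. Suppose B : [0,T] × ℝⁿ → ℝ is continuously differentiable and satisfies: (i) B(T, z) - B(0, x₀) > 0 for all z ∈ X_T and x₀ ∈ X₀; (ii) ∂ₓB(t,x) · f(t,x) + ∂ₜB(t,x) ≤ 0 for all t ∈ [0,T] and x ∈ X. Then there is no solution x : [0,T] → X of the ODE ẋ = f(t,x) with x(0) ∈ X₀ and x(T) ∈ X_T. -/

import Mathlib

theorem stmt_1 {n : ℕ} (X X0 XT : Set (Fin n → ℝ)) (T : ℝ) (hT : 0 < T)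
    (hX0 : X0 ⊆ X) (hXT : XT ⊆ X)
    (f : ℝ → (Fin n → ℝ) → (Fin n → ℝ))
    (B : ℝ × (Fin n → ℝ) → ℝ) (hB : ContDiff ℝ 1 B)
    (h1 : ∀ z ∈ XT, ∀ x0 ∈ X0, 0 < B (T, z) - B (0, x0))
    (h2 : ∀ t ∈ Set.Icc (0:ℝ) T, ∀ x ∈ X, fderiv ℝ B (t, x) (1, f t x) ≤ 0) :
    ¬ ∃ x : ℝ → (Fin n → ℝ), ContDiff ℝ 1 x ∧
        (∀ t ∈ Set.Icc (0:ℝ) T, x t ∈ X) ∧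
        (∀ t ∈ Set.Icc (0:ℝ) T, HasDerivAt x (f t (x t)) t) ∧
        x 0 ∈ X0 ∧ x T ∈ XT := by
  rintro ⟨x, hx, hxX, hode, hx0, hxT⟩
  set g : ℝ → ℝ := fun t => B (t, x t) with hg
  have hder : ∀ t ∈ Set.Icc (0:ℝ) T,
      HasDerivAt g (fderiv ℝ B (t, x t) (1, f t (x t))) t := by
    intro t ht
    have hB' : HasFDerivAt B (fderiv ℝ B (t, x t)) (t, x t) :=
      (hB.differentiable one_ne_zero (t, x t)).hasFDerivAt
    have hc : HasDerivAt (fun s => (s, x s)) ((1 : ℝ), f t (x t)) t :=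
      (hasDerivAt_id t).prodMk (hode t ht)
    exact hB'.comp_hasDerivAt t hc
  have hcont : ContinuousOn g (Set.Icc 0 T) :=
    (hB.continuous.comp (continuous_id.prodMk hx.continuous)).continuousOn
  have hanti : AntitoneOn g (Set.Icc 0 T) := by
    apply antitoneOn_of_deriv_nonpos (convex_Icc 0 T) hcont
    · intro t ht
      rw [interior_Icc] at ht
      exact ((hder t ⟨le_of_lt ht.1, le_of_lt ht.2⟩).differentiableAt).differentiableWithinAt
    · intro t ht
      rw [interior_Icc] at ht
      have ht' : t ∈ Set.Icc (0:ℝ) T := ⟨le_of_lt ht.1, le_of_lt ht.2⟩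
      rw [(hder t ht').deriv]
      exact h2 t ht' (x t) (hxX t ht')
  have : g T ≤ g 0 := hanti (Set.left_mem_Icc.2 hT.le) (Set.right_mem_Icc.2 hT.le) hT.le
  have := h1 (x T) hxT (x 0) hx0
  simp only [hg] at *
  linarith
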